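/- Let $c \in (0,1)$, $\varepsilon > 0$, $s > 0$, and let $\lambda_1,\dots,\lambda_k \ge 0$ and linear maps $B_i : \mathbb{R}^n \to \mathbb{R}^{n_i}$ satisfy $B_i B_i^* = I_{n_i}$ for all $i$. Let $f_i : \mathbb{R}^{n_i} \to [\varepsilon,1]$ and $h : \mathbb{R}^n \to [\varepsilon,1]$ satisfy $\sum_i \lambda_i \Phi_c^{-1}(f_i(x_i)) \le \Phi_c^{-1}(h(\sum_i \lambda_i B_i^* x_i))$ for all $x_i$. Define the sup-convolutions $\Phi_c^{-1}(f_i^s(x)) := \sup_y\{\Phi_c^{-1}(f_i(y)) - s^{-1}\|x-y\|\}$ and $\Phi_c^{-1}(h^s(x)) := \sup_y\{\Phi_c^{-1}(h(y)) - s^{-1}\|x-y\|\}$. Then $f_i^s$ and $h^s$ take values in $[\varepsilon,1]$, the functions $\Phi_c^{-1}(f_i^s)$ and $\Phi_c^{-1}(h^s)$ are $s^{-1}$-Lipschitz, and $\sum_i \lambda_i \Phi_c^{-1}(f_i^s(x_i)) \le \Phi_c^{-1}(h^s(\sum_i \lambda_i B_i^* x_i))$ for all $x_i \in \mathbb{R}^{n_i}$.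 -/

import Mathlib

open MeasureTheory Real Set
open scoped Pointwise

/-- The standard Gaussian CDF. -/
noncomputable def Phi (x : ℝ) : ℝ :=
  ∫ z in Set.Iic x, Real.exp (-z ^ 2 / 2) / Real.sqrt (2 * Real.pi)

/-- The inverse of the standard Gaussian CDF. -/
noncomputable def PhiInv : ℝ → ℝ := Function.invFun Phi

/-- The standard Gaussian measure on `ℝ^n`. -/
noncomputable def stdGaussian (n : ℕ) : Measure (EuclideanSpace ℝ (Fin n)) :=
  volume.withDensity
    (fun x => ENNReal.ofReal ((2 * Real.pi) ^ (-(n : ℝ) / 2) * Real.exp (-‖x‖ ^ 2 / 2)))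

/-- `Φ_c⁻¹(x) := Φ⁻¹(cx) - Φ⁻¹(c)`. -/
noncomputable def phiInvC (c x : ℝ) : ℝ := PhiInv (c * x) - PhiInv c

noncomputable def gpdf (z : ℝ) : ℝ := Real.exp (-z ^ 2 / 2) / Real.sqrt (2 * Real.pi)

lemma gpdf_pos (z : ℝ) : 0 < gpdf z := by
  unfold gpdf
  have h : (0:ℝ) < Real.sqrt (2 * Real.pi) := Real.sqrt_pos.2 (by positivity)
  positivity

lemma gpdf_eq : gpdf = fun z => Real.exp (-(1/2 : ℝ) * z ^ 2) / Real.sqrt (2 * Real.pi) := by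
  funext z
  unfold gpdf
  rw [show -z ^ 2 / 2 = -(1/2 : ℝ) * z ^ 2 by ring]

lemma integrable_gpdf : Integrable gpdf := by
  rw [gpdf_eq]
  exact (integrable_exp_neg_mul_sq (by norm_num : (0:ℝ) < 1/2)).div_const _

lemma Phi_eq (x : ℝ) : Phi x = ∫ z in Set.Iic x, gpdf z := rfl

lemma integral_gpdf : ∫ z, gpdf z = 1 := by
  rw [gpdf_eq, integral_div, integral_gaussian]
  rw [div_eq_one_iff_eq (by positivity : Real.sqrt (2 * Real.pi) ≠ 0)]
  congr 1
  ring

lemma Phi_strictMono : StrictMono Phi := by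
  intro a b hab
  have hdis : Disjoint (Set.Iic a) (Set.Ioc a b) := Iic_disjoint_Ioc le_rfl
  have hsplit : Phi b = Phi a + ∫ z in Set.Ioc a b, gpdf z := by
    rw [Phi_eq, Phi_eq, ← setIntegral_union hdis measurableSet_Ioc
      integrable_gpdf.integrableOn integrable_gpdf.integrableOn, Iic_union_Ioc_eq_Iic hab.le]
  have hpos : 0 < ∫ z in Set.Ioc a b, gpdf z := by
    rw [setIntegral_pos_iff_support_of_nonneg_ae
      (Filter.Eventually.of_forall fun z => (gpdf_pos z).le) integrable_gpdf.integrableOn]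
    have hsupp : Function.support gpdf = Set.univ := by
      ext z; simp [Function.mem_support, (gpdf_pos z).ne']
    rw [hsupp, Set.univ_inter, Real.volume_Ioc]
    simp [hab]
  linarith

lemma int_eq (a b : ℝ) : (∫ t in a..b, gpdf t) = Phi b - Phi a := by
  rw [Phi_eq, Phi_eq]
  exact (intervalIntegral.integral_Iic_sub_Iic integrable_gpdf.integrableOn
    integrable_gpdf.integrableOn).symm

lemma Phi_continuous : Continuous Phi := by
  have h := integrable_gpdf.continuous_primitive (μ := volume) 0
  have heq : Phi = fun x => Phi 0 + ∫ t in (0:ℝ)..x, gpdf t := by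
    funext x
    rw [int_eq]
    ring
  rw [heq]
  exact continuous_const.add h

lemma Phi_tendsto_atBot : Filter.Tendsto Phi Filter.atBot (nhds 0) := by
  have h := intervalIntegral_tendsto_integral_Iic (μ := volume) (0:ℝ)
    integrable_gpdf.integrableOn (Filter.tendsto_id (α := ℝ))
  simp only [int_eq, ← Phi_eq] at h
  have := h.const_sub (Phi 0)
  simpa using this

lemma Phi_tendsto_atTop : Filter.Tendsto Phi Filter.atTop (nhds 1) := by
  have h := intervalIntegral_tendsto_integral (μ := volume) integrable_gpdf
    Filter.tendsto_neg_atTop_atBot (Filter.tendsto_id (α := ℝ))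
  rw [integral_gpdf] at h
  simp only [int_eq] at h
  have hb : Filter.Tendsto (fun x : ℝ => Phi (-x)) Filter.atTop (nhds 0) :=
    Phi_tendsto_atBot.comp Filter.tendsto_neg_atTop_atBot
  have := h.add hb
  simpa using this

lemma mem_range_Phi {t : ℝ} (ht : t ∈ Set.Ioo (0:ℝ) 1) : ∃ x, Phi x = t := by
  have h1 : ∀ᶠ x in Filter.atBot, Phi x ≤ t :=
    (Phi_tendsto_atBot.eventually_lt_const ht.1).mono fun _ h => h.le
  have h2 : ∀ᶠ x in Filter.atTop, t ≤ Phi x :=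
    (Phi_tendsto_atTop.eventually_const_lt ht.2).mono fun _ h => h.le
  exact intermediate_value_univ₂_eventually₂ Phi_continuous continuous_const h1 h2

lemma PhiInv_Phi (x : ℝ) : PhiInv (Phi x) = x :=
  Function.leftInverse_invFun Phi_strictMono.injective x

lemma Phi_PhiInv {t : ℝ} (ht : t ∈ Set.Ioo (0:ℝ) 1) : Phi (PhiInv t) = t :=
  Function.invFun_eq (mem_range_Phi ht)

lemma PhiInv_le_PhiInv {a b : ℝ} (ha : a ∈ Set.Ioo (0:ℝ) 1) (hb : b ∈ Set.Ioo (0:ℝ) 1)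
    (hab : a ≤ b) : PhiInv a ≤ PhiInv b :=
  Phi_strictMono.le_iff_le.mp (by rw [Phi_PhiInv ha, Phi_PhiInv hb]; exact hab)

lemma mul_mem_Ioo {c x : ℝ} (hc : c ∈ Set.Ioo (0:ℝ) 1) (hx0 : 0 < x) (hx1 : x ≤ 1) :
    c * x ∈ Set.Ioo (0:ℝ) 1 :=
  ⟨mul_pos hc.1 hx0, lt_of_le_of_lt (mul_le_of_le_one_right hc.1.le hx1) hc.2⟩

lemma phiInvC_nonpos {c x : ℝ} (hc : c ∈ Set.Ioo (0:ℝ) 1) (hx0 : 0 < x) (hx1 : x ≤ 1) :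
    phiInvC c x ≤ 0 :=
  sub_nonpos.2 (PhiInv_le_PhiInv (mul_mem_Ioo hc hx0 hx1) (by simpa using hc)
    (mul_le_of_le_one_right hc.1.le hx1))

lemma phiInvC_mono {c a b : ℝ} (hc : c ∈ Set.Ioo (0:ℝ) 1) (ha : 0 < a) (hab : a ≤ b)
    (hb : b ≤ 1) : phiInvC c a ≤ phiInvC c b :=
  sub_le_sub_right (PhiInv_le_PhiInv (mul_mem_Ioo hc ha (hab.trans hb))
    (mul_mem_Ioo hc (ha.trans_le hab) hb) (by nlinarith [hc.1])) _

lemma bddAbove_supconv {E : Type*} [SeminormedAddCommGroup E] {φ : E → ℝ} {K : ℝ}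
    (hK : 0 ≤ K) (hub : ∀ y, φ y ≤ 0) (x : E) :
    BddAbove (Set.range fun y => φ y - K * ‖x - y‖) := by
  refine ⟨0, ?_⟩
  rintro _ ⟨y, rfl⟩
  have h1 := hub y
  have h2 := mul_nonneg hK (norm_nonneg (x - y))
  dsimp
  linarith

lemma supconv_main {E : Type*} [NormedAddCommGroup E] [Nonempty E]
    {c ε K : ℝ} (hc : c ∈ Set.Ioo (0:ℝ) 1) (hε : 0 < ε) (hε1 : ε ≤ 1) (hK : 0 ≤ K)
    {φ : E → ℝ} (hφ : ∀ y, φ y ∈ Set.Icc ε 1)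
    {F : E → ℝ} (hF : ∀ x, F x = ⨆ y, (phiInvC c (φ y) - K * ‖x - y‖)) :
    (∃ fS : E → ℝ, (∀ x, fS x ∈ Set.Icc ε 1) ∧ ∀ x, phiInvC c (fS x) = F x)
    ∧ LipschitzWith (Real.toNNReal K) F
    ∧ (∀ x, F x ≤ 0) ∧ (∀ x y, phiInvC c (φ y) - K * ‖x - y‖ ≤ F x) := by
  have hub : ∀ y, phiInvC c (φ y) ≤ 0 := fun y =>
    phiInvC_nonpos hc (hε.trans_le (hφ y).1) (hφ y).2
  have hbdd := bddAbove_supconv (φ := fun y => phiInvC c (φ y)) hK hub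
  have hle : ∀ x y, phiInvC c (φ y) - K * ‖x - y‖ ≤ F x := by
    intro x y
    rw [hF]
    exact le_ciSup (hbdd x) y
  have hFub : ∀ x, F x ≤ 0 := by
    intro x
    rw [hF]
    refine ciSup_le fun y => ?_
    have := mul_nonneg hK (norm_nonneg (x - y))
    linarith [hub y]
  have hFlb : ∀ x, phiInvC c ε ≤ F x := by
    intro x
    refine le_trans ?_ (hle x x)
    simp only [sub_self, norm_zero, mul_zero, sub_zero]
    exact phiInvC_mono hc hε (hφ x).1 (hφ x).2
  have hlip : LipschitzWith (Real.toNNReal K) F := by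
    refine LipschitzWith.of_le_add_mul' K fun x x' => ?_
    rw [hF x]
    refine ciSup_le fun y => ?_
    have htri : ‖x' - y‖ ≤ ‖x' - x‖ + ‖x - y‖ := by
      simpa using norm_add_le (x' - x) (x - y)
    have h1 : phiInvC c (φ y) - K * ‖x - y‖
        ≤ (phiInvC c (φ y) - K * ‖x' - y‖) + K * ‖x' - x‖ := by
      nlinarith [mul_le_mul_of_nonneg_left htri hK]
    have h2 := hle x' y
    have hd : dist x x' = ‖x' - x‖ := by rw [dist_comm, dist_eq_norm]
    rw [hd]
    linarith
  refine ⟨⟨fun x => Phi (F x + PhiInv c) / c, fun x => ?_, fun x => ?_⟩, hlip, hFub, hle⟩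
  · have hcε : c * ε ∈ Set.Ioo (0:ℝ) 1 := mul_mem_Ioo hc hε hε1
    have hc1 : c ∈ Set.Ioo (0:ℝ) 1 := hc
    have hl : PhiInv (c * ε) ≤ F x + PhiInv c := by
      have := hFlb x
      unfold phiInvC at this
      linarith
    have hr : F x + PhiInv c ≤ PhiInv c := by linarith [hFub x]
    have hPl : c * ε ≤ Phi (F x + PhiInv c) := by
      conv_lhs => rw [← Phi_PhiInv hcε]
      exact Phi_strictMono.monotone hl
    have hPr : Phi (F x + PhiInv c) ≤ c := by
      conv_rhs => rw [← Phi_PhiInv hc1]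
      exact Phi_strictMono.monotone hr
    constructor
    · rw [le_div_iff₀ hc.1]
      linarith
    · rw [div_le_one hc.1]
      exact hPr
  · show PhiInv (c * (Phi (F x + PhiInv c) / c)) - PhiInv c = F x
    rw [mul_comm, div_mul_cancel₀ _ hc.1.ne']
    rw [PhiInv_Phi]
    ring

lemma adjoint_norm {n m : ℕ} (B : EuclideanSpace ℝ (Fin n) →L[ℝ] EuclideanSpace ℝ (Fin m))
    (hB : B.comp (ContinuousLinearMap.adjoint B) = ContinuousLinearMap.id ℝ _)
    (z : EuclideanSpace ℝ (Fin m)) : ‖(ContinuousLinearMap.adjoint B) z‖ = ‖z‖ := by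
  have h1 : B ((ContinuousLinearMap.adjoint B) z) = z := by
    have := congrArg (fun T => T z) hB
    simpa using this
  have h2 : (inner ℝ ((ContinuousLinearMap.adjoint B) z) ((ContinuousLinearMap.adjoint B) z) : ℝ)
      = inner ℝ z z := by
    rw [ContinuousLinearMap.adjoint_inner_left, h1]
  rw [real_inner_self_eq_norm_sq, real_inner_self_eq_norm_sq] at h2
  have := congrArg Real.sqrt h2
  rwa [Real.sqrt_sq (norm_nonneg _), Real.sqrt_sq (norm_nonneg _)] at this

/-- Sup-convolution regularization preserves the hypothesis of the Gaussian reverse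
Brascamp-Lieb inequality: the regularized functions take values in `[ε,1]`, the
`Φ_c⁻¹`-transforms are `s⁻¹`-Lipschitz, and the multilinear inequality is preserved. -/
theorem stmt13 (c ε s : ℝ) (hc : c ∈ Set.Ioo (0:ℝ) 1) (hε : 0 < ε) (hε1 : ε ≤ 1) (hs : 0 < s)
    (k n : ℕ) (m : Fin k → ℕ) (lam : Fin k → ℝ) (hlam : ∀ i, 0 ≤ lam i)
    (B : ∀ i, EuclideanSpace ℝ (Fin n) →L[ℝ] EuclideanSpace ℝ (Fin (m i)))
    (hB : ∀ i, (B i).comp (ContinuousLinearMap.adjoint (B i)) = ContinuousLinearMap.id ℝ _)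
    (f : ∀ i, EuclideanSpace ℝ (Fin (m i)) → ℝ) (h : EuclideanSpace ℝ (Fin n) → ℝ)
    (hf : ∀ i x, f i x ∈ Set.Icc ε 1) (hh : ∀ x, h x ∈ Set.Icc ε 1)
    (hyp : ∀ x : ∀ i, EuclideanSpace ℝ (Fin (m i)),
      ∑ i, lam i * phiInvC c (f i (x i))
        ≤ phiInvC c (h (∑ i, lam i • (ContinuousLinearMap.adjoint (B i)) (x i))))
    (G : ∀ i, EuclideanSpace ℝ (Fin (m i)) → ℝ) (Gh : EuclideanSpace ℝ (Fin n) → ℝ)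
    (hG : ∀ i x, G i x = ⨆ y, (phiInvC c (f i y) - s⁻¹ * ‖x - y‖))
    (hGh : ∀ x, Gh x = ⨆ y, (phiInvC c (h y) - s⁻¹ * ‖x - y‖)) :
    (∀ i, ∃ fS : EuclideanSpace ℝ (Fin (m i)) → ℝ,
        (∀ x, fS x ∈ Set.Icc ε 1) ∧ ∀ x, phiInvC c (fS x) = G i x)
      ∧ (∃ hS : EuclideanSpace ℝ (Fin n) → ℝ,
          (∀ x, hS x ∈ Set.Icc ε 1) ∧ ∀ x, phiInvC c (hS x) = Gh x)
      ∧ (∀ i, LipschitzWith (Real.toNNReal s⁻¹) (G i))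
      ∧ LipschitzWith (Real.toNNReal s⁻¹) Gh
      ∧ ∀ x : ∀ i, EuclideanSpace ℝ (Fin (m i)),
          ∑ i, lam i * G i (x i)
            ≤ Gh (∑ i, lam i • (ContinuousLinearMap.adjoint (B i)) (x i)) := by
  have hK : (0:ℝ) ≤ s⁻¹ := inv_nonneg.2 hs.le
  have main := fun i => supconv_main hc hε hε1 hK (hf i) (hG i)
  have mainh := supconv_main hc hε hε1 hK hh hGh
  refine ⟨fun i => (main i).1, mainh.1, fun i => (main i).2.1, mainh.2.1, ?_⟩
  intro x
  refine le_of_forall_pos_le_add fun δ hδ => ?_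
  have hS : (0:ℝ) ≤ ∑ j, lam j := Finset.sum_nonneg fun j _ => hlam j
  have hSpos : (0:ℝ) < ∑ j, lam j + 1 := by linarith
  have hδ' : 0 < δ / (∑ j, lam j + 1) := div_pos hδ hSpos
  have hex : ∀ i, ∃ yi, G i (x i) - δ / (∑ j, lam j + 1)
      < phiInvC c (f i yi) - s⁻¹ * ‖x i - yi‖ := by
    intro i
    refine exists_lt_of_lt_ciSup ?_
    rw [← hG i]
    linarith
  choose y hy using hex
  have hnorm : ‖(∑ i, lam i • (ContinuousLinearMap.adjoint (B i)) (x i))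
      - ∑ i, lam i • (ContinuousLinearMap.adjoint (B i)) (y i)‖
      ≤ ∑ i, lam i * ‖x i - y i‖ := by
    rw [← Finset.sum_sub_distrib]
    refine (norm_sum_le _ _).trans (Finset.sum_le_sum fun i _ => ?_)
    rw [← smul_sub, ← map_sub, norm_smul, Real.norm_eq_abs, abs_of_nonneg (hlam i),
      adjoint_norm (B i) (hB i)]
  have h1 : ∑ i, lam i * G i (x i)
      ≤ ∑ i, (lam i * phiInvC c (f i (y i)) - s⁻¹ * (lam i * ‖x i - y i‖)
          + (δ / (∑ j, lam j + 1)) * lam i) := by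
    refine Finset.sum_le_sum fun i _ => ?_
    have ht : G i (x i) ≤ phiInvC c (f i (y i)) - s⁻¹ * ‖x i - y i‖
        + δ / (∑ j, lam j + 1) := by linarith [hy i]
    calc lam i * G i (x i)
        ≤ lam i * (phiInvC c (f i (y i)) - s⁻¹ * ‖x i - y i‖ + δ / (∑ j, lam j + 1)) :=
          mul_le_mul_of_nonneg_left ht (hlam i)
      _ = lam i * phiInvC c (f i (y i)) - s⁻¹ * (lam i * ‖x i - y i‖)
          + (δ / (∑ j, lam j + 1)) * lam i := by ring
  have h2 : ∑ i, (lam i * phiInvC c (f i (y i)) - s⁻¹ * (lam i * ‖x i - y i‖)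
          + (δ / (∑ j, lam j + 1)) * lam i)
      = (∑ i, lam i * phiInvC c (f i (y i))) - s⁻¹ * (∑ i, lam i * ‖x i - y i‖)
          + (δ / (∑ j, lam j + 1)) * (∑ j, lam j) := by
    rw [Finset.sum_add_distrib, Finset.sum_sub_distrib, ← Finset.mul_sum, ← Finset.mul_sum]
  have h3 := mainh.2.2.2 (∑ i, lam i • (ContinuousLinearMap.adjoint (B i)) (x i))
    (∑ i, lam i • (ContinuousLinearMap.adjoint (B i)) (y i))
  have h4 : s⁻¹ * ‖(∑ i, lam i • (ContinuousLinearMap.adjoint (B i)) (x i))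
      - ∑ i, lam i • (ContinuousLinearMap.adjoint (B i)) (y i)‖
      ≤ s⁻¹ * ∑ i, lam i * ‖x i - y i‖ := mul_le_mul_of_nonneg_left hnorm hK
  have h5 : (δ / (∑ j, lam j + 1)) * (∑ j, lam j) ≤ δ := by
    rw [div_mul_eq_mul_div, div_le_iff₀ hSpos]
    nlinarith
  linarith [hyp y, h1, h2, h3, h4, h5]
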